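/- For every j ≥ 0, there exists an integer p with 1 ≤ p < 2^j (or p = 1 when 2^j ≤ 2), gcd(p, 2^j) = 1, such that all partial quotients of the continued fraction expansion of p/2^j are at most 3. -/
import Mathlib


open Matrix

/-- The generator matrix ((0,1),(1,a)). -/
def genM (a : ℕ) : Matrix (Fin 2) (Fin 2) ℤ := !![0, 1; 1, (a : ℤ)]

/-- Product of generators along a finite sequence. -/
def prodM (l : List ℕ) : Matrix (Fin 2) (Fin 2) ℤ := (l.map genM).prod

/-- Finite continued fraction [a₁,...,a_k] = 1/(a₁ + 1/(a₂ + ⋯ + 1/a_k)). -/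
def cf : List ℕ → ℚ
  | [] => 0
  | a :: t => 1 / ((a : ℚ) + cf t)
lemma prodM_nil : prodM [] = 1 := rfl

lemma prodM_cons (x : ℕ) (t : List ℕ) : prodM (x :: t) = genM x * prodM t := by
  simp [prodM]

lemma prodM_append (l₁ l₂ : List ℕ) : prodM (l₁ ++ l₂) = prodM l₁ * prodM l₂ := by
  simp [prodM]

lemma genM_transpose (x : ℕ) : (genM x)ᵀ = genM x := by
  ext i j; fin_cases i <;> fin_cases j <;> simp [genM]

lemma prodM_reverse (l : List ℕ) : prodM l.reverse = (prodM l)ᵀ := by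
  induction l with
  | nil => simp [prodM_nil]
  | cons x t ih =>
      rw [List.reverse_cons, prodM_append, prodM_cons, ih, prodM_cons,
        Matrix.transpose_mul, genM_transpose, prodM_nil]
      simp

lemma genM_mul (x : ℕ) (M : Matrix (Fin 2) (Fin 2) ℤ) :
    genM x * M = !![M 1 0, M 1 1; M 0 0 + x * M 1 0, M 0 1 + x * M 1 1] := by
  ext i j
  fin_cases i <;> fin_cases j <;>
    simp [genM, Matrix.mul_apply, Fin.sum_univ_two, mul_comm]

lemma prodM_cons00 (x : ℕ) (t : List ℕ) : prodM (x :: t) 0 0 = prodM t 1 0 := by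
  rw [prodM_cons, genM_mul]; simp

lemma prodM_cons01 (x : ℕ) (t : List ℕ) : prodM (x :: t) 0 1 = prodM t 1 1 := by
  rw [prodM_cons, genM_mul]; simp

lemma prodM_cons10 (x : ℕ) (t : List ℕ) :
    prodM (x :: t) 1 0 = prodM t 0 0 + x * prodM t 1 0 := by
  rw [prodM_cons, genM_mul]; simp

lemma prodM_cons11 (x : ℕ) (t : List ℕ) :
    prodM (x :: t) 1 1 = prodM t 0 1 + x * prodM t 1 1 := by
  rw [prodM_cons, genM_mul]; simp

lemma cf_prodM (l : List ℕ) (hl : ∀ x ∈ l, 1 ≤ x) :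
    (0 ≤ prodM l 0 0 ∧ 0 ≤ prodM l 0 1 ∧ 0 ≤ prodM l 1 0 ∧ 1 ≤ prodM l 1 1) ∧
    (prodM l 0 1 ≤ prodM l 1 1 ∧ prodM l 1 0 ≤ prodM l 1 1 ∧
      prodM l 0 0 + prodM l 1 0 ≤ prodM l 0 1 + prodM l 1 1) ∧
    cf l = (prodM l 0 1 : ℚ) / (prodM l 1 1 : ℚ) ∧
    (l ≠ [] → 1 ≤ prodM l 0 1) := by
  induction l with
  | nil => simp [prodM_nil, cf, Matrix.one_apply]
  | cons x t ih =>
      have hx : 1 ≤ x := hl x (by simp)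
      have ih' := ih (fun y hy => hl y (by simp [hy]))
      obtain ⟨⟨ha, hb, hc, hd⟩, ⟨hbd, hcd, habcd⟩, hcf, _⟩ := ih'
      rw [prodM_cons00, prodM_cons01, prodM_cons10, prodM_cons11]
      have hx' : (1 : ℤ) ≤ (x : ℤ) := by exact_mod_cast hx
      refine ⟨⟨hc, by linarith, by nlinarith, by nlinarith⟩,
        ⟨by nlinarith, by nlinarith, by nlinarith⟩, ?_, fun _ => by linarith⟩
      rw [cf, hcf]
      have hdQ : (0 : ℚ) < (prodM t 1 1 : ℤ) := by exact_mod_cast hd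
      have hbQ : (0 : ℚ) ≤ (prodM t 0 1 : ℤ) := by exact_mod_cast hb
      have hxQ : (1 : ℚ) ≤ (x : ℚ) := by exact_mod_cast hx
      have hden : (0 : ℚ) < (x : ℚ) + (prodM t 0 1 : ℤ) / (prodM t 1 1 : ℤ) := by
        have : (0:ℚ) ≤ (prodM t 0 1 : ℤ) / (prodM t 1 1 : ℤ) := by positivity
        linarith
      have hden2 : (0 : ℚ) < ((prodM t 0 1 + (x:ℤ) * prodM t 1 1 : ℤ) : ℚ) := by
        have : (0:ℤ) < prodM t 0 1 + (x:ℤ) * prodM t 1 1 := by nlinarith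
        exact_mod_cast this
      rw [div_eq_div_iff (by linarith) (ne_of_gt hden2)]
      push_cast
      field_simp
      ring

lemma det_prodM (l : List ℕ) :
    prodM l 0 0 * prodM l 1 1 - prodM l 0 1 * prodM l 1 0 = 1 ∨
    prodM l 0 0 * prodM l 1 1 - prodM l 0 1 * prodM l 1 0 = -1 := by
  induction l with
  | nil => left; simp [prodM_nil, Matrix.one_apply]
  | cons x t ih =>
      rw [prodM_cons00, prodM_cons01, prodM_cons10, prodM_cons11]
      rcases ih with h | h
      · right; nlinarith
      · left; nlinarith

lemma suffix11 (T : List ℕ) :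
    prodM (T ++ [1, 1]) 1 1 = prodM T 1 0 + 2 * prodM T 1 1 := by
  rw [prodM_append]
  have h : prodM [1, 1] = !![1, 1; 1, 2] := by
    norm_num [prodM, genM, Matrix.mul_fin_two]
  rw [h]
  simp [Matrix.mul_apply, Fin.sum_univ_two]
  ring

lemma fold_entry (T G : List ℕ) :
    prodM (T ++ (G ++ T.reverse)) 1 1 =
      prodM G 0 0 * prodM T 1 0 ^ 2 +
      (prodM G 0 1 + prodM G 1 0) * (prodM T 1 0 * prodM T 1 1) +
      prodM G 1 1 * prodM T 1 1 ^ 2 := by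
  rw [prodM_append, prodM_append, prodM_reverse]
  simp [Matrix.mul_apply, Fin.sum_univ_two, Matrix.transpose_apply]
  ring

def Pm (m : ℕ) : Prop :=
  ∃ S : List ℕ, (∀ a ∈ S, 1 ≤ a ∧ a ≤ 3) ∧
    prodM ((1 :: 1 :: S) ++ [1, 1]) 1 1 = 2 ^ m

lemma Pm_step {m : ℕ} (h : Pm m) : Pm (2*m) ∧ Pm (2*m+1) ∧ Pm (2*m+2) := by
  obtain ⟨S, hS, hval⟩ := h
  rw [suffix11] at hval
  have key : ∀ G : List ℕ, ∀ k : ℕ,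
      prodM G 0 0 * prodM ((1:ℕ) :: 1 :: S) 1 0 ^ 2 +
        (prodM G 0 1 + prodM G 1 0) * (prodM ((1:ℕ) :: 1 :: S) 1 0 * prodM ((1:ℕ) :: 1 :: S) 1 1) +
        prodM G 1 1 * prodM ((1:ℕ) :: 1 :: S) 1 1 ^ 2 =
        2 ^ k * (prodM ((1:ℕ) :: 1 :: S) 1 0 + 2 * prodM ((1:ℕ) :: 1 :: S) 1 1) ^ 2 →
      (∀ a ∈ G, 1 ≤ a ∧ a ≤ 3) → Pm (2*m + k) := by
    intro G k hG hGd
    refine ⟨S ++ G ++ S.reverse, ?_, ?_⟩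
    · intro a ha
      simp only [List.mem_append, List.mem_reverse] at ha
      rcases ha with (ha | ha) | ha
      · exact hS a ha
      · exact hGd a ha
      · exact hS a ha
    · have hw : ((1 :: 1 :: (S ++ G ++ S.reverse)) ++ [1, 1] : List ℕ) =
          (1 :: 1 :: S) ++ (G ++ (1 :: 1 :: S).reverse) := by
        simp
      rw [hw, fold_entry, hG, hval, ← pow_mul, ← pow_add]
      congr 1
      ring
  refine ⟨?_, ?_, ?_⟩
  · have := key [1, 3] 0 ?_ (by decide)
    · simpa using this
    · have hG : prodM [1, 3] = !![1, 3; 1, 4] := by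
        norm_num [prodM, genM, Matrix.mul_fin_two]
      rw [hG]; norm_num; ring
  · refine key [1, 1, 1, 2] 1 ?_ (by decide)
    have hG : prodM [1, 1, 1, 2] = !![2, 5; 3, 8] := by
      norm_num [prodM, genM, Matrix.mul_fin_two]
    rw [hG]; norm_num; ring
  · refine key [1, 1, 3, 2] 2 ?_ (by decide)
    have hG : prodM [1, 1, 3, 2] = !![4, 9; 7, 16] := by
      norm_num [prodM, genM, Matrix.mul_fin_two]
    rw [hG]; norm_num; ring

lemma Pm3 : Pm 3 :=
  ⟨[1], by decide, by norm_num [prodM, genM, Matrix.mul_fin_two]⟩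

lemma Pm4 : Pm 4 :=
  ⟨[3], by decide, by norm_num [prodM, genM, Matrix.mul_fin_two]⟩

lemma Pm11 : Pm 11 :=
  ⟨[2, 1, 1, 3, 3, 2, 1, 1], by decide, by norm_num [prodM, genM, Matrix.mul_fin_two]⟩

lemma Pm_all : ∀ m, m = 3 ∨ m = 4 ∨ 6 ≤ m → Pm m := by
  intro m
  induction m using Nat.strong_induction_on with
  | _ m ih =>
    intro hm
    rcases show m = 3 ∨ m = 4 ∨ m = 6 ∨ m = 7 ∨ m = 8 ∨ m = 9 ∨ m = 10 ∨ m = 11 ∨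
        12 ≤ m by omega with h | h | h | h | h | h | h | h | h
    · exact h ▸ Pm3
    · exact h ▸ Pm4
    · exact h ▸ (Pm_step Pm3).1
    · exact h ▸ (Pm_step Pm3).2.1
    · exact h ▸ (Pm_step Pm4).1
    · exact h ▸ (Pm_step Pm4).2.1
    · exact h ▸ (Pm_step Pm4).2.2
    · exact h ▸ Pm11
    · have hk : m / 2 = 3 ∨ m / 2 = 4 ∨ 6 ≤ m / 2 := by omega
      have hp := ih (m / 2) (by omega) hk
      rcases show m = 2 * (m / 2) ∨ m = 2 * (m / 2) + 1 by omega with h2 | h2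
      · exact h2 ▸ (Pm_step hp).1
      · exact h2 ▸ (Pm_step hp).2.1

lemma extract (j : ℕ) (hj : 1 ≤ j) (W : List ℕ) (hne : W ≠ [])
    (hd : ∀ a ∈ W, 1 ≤ a ∧ a ≤ 3) (hW : prodM W 1 1 = 2 ^ j) :
    ∃ p : ℕ, 1 ≤ p ∧ (p < 2 ^ j ∨ (p = 1 ∧ 2 ^ j ≤ 2)) ∧
      Nat.gcd p (2 ^ j) = 1 ∧
      ∃ l : List ℕ, (∀ a ∈ l, 1 ≤ a ∧ a ≤ 3) ∧ cf l = (p : ℚ) / (2 ^ j : ℚ) := by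
  obtain ⟨⟨ha0, hb0, hc0, hd0⟩, ⟨hbd, hcd, habcd⟩, hcf, hb1'⟩ :=
    cf_prodM W (fun x hx => (hd x hx).1)
  have hb1 : 1 ≤ prodM W 0 1 := hb1' hne
  obtain ⟨p, hp⟩ := Int.eq_ofNat_of_zero_le hb0
  have hdi : ((2 ^ j : ℕ) : ℤ) = prodM W 1 1 := by rw [hW]; push_cast; ring
  have h2d : (2 : ℤ) ≤ prodM W 1 1 := by
    rw [hW]
    calc (2:ℤ) = 2 ^ 1 := by norm_num
    _ ≤ 2 ^ j := pow_le_pow_right₀ (by norm_num) hj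
  have hblt : prodM W 0 1 < prodM W 1 1 := by
    rcases lt_or_eq_of_le hbd with h | h
    · exact h
    · exfalso
      rcases det_prodM W with he | he
      · have hdvd : prodM W 1 1 ∣ 1 :=
          ⟨prodM W 0 0 - prodM W 1 0, by rw [← he, ← h]; ring⟩
        have := Int.le_of_dvd one_pos hdvd
        linarith
      · have hdvd : prodM W 1 1 ∣ 1 :=
          ⟨prodM W 1 0 - prodM W 0 0, by rw [show (1:ℤ) = -(-1) by ring, ← he, ← h]; ring⟩
        have := Int.le_of_dvd one_pos hdvd
        linarith
  have hic : IsCoprime (prodM W 0 1) (prodM W 1 1) := by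
    rcases det_prodM W with he | he
    · exact ⟨-prodM W 1 0, prodM W 0 0, by linarith [he]⟩
    · exact ⟨prodM W 1 0, -prodM W 0 0, by linarith [he]⟩
  have hgcd : Nat.gcd p (2 ^ j) = 1 := by
    have := Int.isCoprime_iff_gcd_eq_one.mp hic
    rwa [hp, ← hdi, Int.gcd_natCast_natCast] at this
  refine ⟨p, ?_, ?_, hgcd, W, hd, ?_⟩
  · exact_mod_cast hp ▸ hb1
  · left
    have : (p : ℤ) < ((2 ^ j : ℕ) : ℤ) := by rw [hdi, ← hp]; exact hblt
    exact_mod_cast this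
  · rw [hcf, hp, hW]
    push_cast
    ring

theorem stmt_4 (j : ℕ) :
    ∃ p : ℕ, 1 ≤ p ∧ (p < 2 ^ j ∨ (p = 1 ∧ 2 ^ j ≤ 2)) ∧
      Nat.gcd p (2 ^ j) = 1 ∧
      ∃ l : List ℕ, (∀ a ∈ l, 1 ≤ a ∧ a ≤ 3) ∧ cf l = (p : ℚ) / (2 ^ j : ℚ) := by
  rcases show j = 0 ∨ j = 1 ∨ j = 2 ∨ j = 3 ∨ j = 4 ∨ j = 5 ∨ 6 ≤ j by omega with
    h | h | h | h | h | h | h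
  · subst h
    exact ⟨1, by norm_num, by norm_num, by norm_num, [1], by decide, by norm_num [cf]⟩
  · subst h
    exact ⟨1, by norm_num, by norm_num, by norm_num, [2], by decide, by norm_num [cf]⟩
  · subst h
    exact ⟨3, by norm_num, by norm_num, by norm_num, [1, 3], by decide, by norm_num [cf]⟩
  · subst h
    exact ⟨3, by norm_num, by norm_num, by norm_num, [2, 1, 2], by decide, by norm_num [cf]⟩
  · subst h
    exact ⟨7, by norm_num, by norm_num, by norm_num, [2, 3, 2], by decide, by norm_num [cf]⟩
  · subst h
    exact ⟨25, by norm_num, by norm_num, by norm_num, [1, 3, 1, 1, 3], by decide,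
      by norm_num [cf]⟩
  · obtain ⟨S, hS, hval⟩ := Pm_all j (by omega)
    refine extract j (by omega) _ (by simp) ?_ hval
    intro a ha
    simp only [List.mem_append, List.mem_cons] at ha
    rcases ha with (h1 | h1 | h1) | h1
    · omega
    · omega
    · exact hS a h1
    · simp at h1; omega
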